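/- The Λ-metric space (Γ_G, d) is 0-hyperbolic with respect to the basepoint ε = ⟨0,1⟩: for all points p, q, r ∈ Γ_G, the triple of Gromov products ((p·q)_ε, (p·r)_ε, (q·r)_ε) is isosceles. -/

import Mathlib

/-- The `Λ`-metric space `(Γ_G, d)` is `0`-hyperbolic with respect to
the basepoint `ε = ⟨0,1⟩`: for all points `p, q, r ∈ Γ_G` the triple of Gromov
products `((p·q)_ε, (p·r)_ε, (q·r)_ε)` is isosceles (its minimum is attained at
least twice).  Points of `Γ_G` are represented by pairs `(α,f)` with `0 ≤ α ≤ l f`,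
`d` is the universal tree metric, and `gp p q` denotes `(p·q)_ε`, determined by
`2 • gp p q = d ε p + d ε q - d p q`. -/
theorem universal_tree_zero_hyperbolic {Λ : Type*} [AddCommGroup Λ] [LinearOrder Λ] [IsOrderedAddMonoid Λ]
    {G : Type*} [Group G] (l : G → Λ) (c : G → G → Λ)
    (hc : ∀ x y, 2 • c x y = l x + l y - l (x⁻¹ * y))
    (hL1 : ∀ x, 0 ≤ l x) (hL1' : l 1 = 0)
    (hL2 : ∀ x, l x⁻¹ = l x)
    (hL3 : ∀ x y z, c x z < c x y → c x z = c y z)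
    (d : Λ × G → Λ × G → Λ)
    (hd : ∀ p q : Λ × G, d p q = p.1 + q.1 - 2 • min p.1 (min q.1 (c p.2 q.2)))
    (gp : Λ × G → Λ × G → Λ)
    (hgp : ∀ p q : Λ × G, 2 • gp p q = d ((0 : Λ), (1 : G)) p + d ((0 : Λ), (1 : G)) q - d p q) :
    ∀ p q r : Λ × G,
      0 ≤ p.1 → p.1 ≤ l p.2 → 0 ≤ q.1 → q.1 ≤ l q.2 → 0 ≤ r.1 → r.1 ≤ l r.2 →
      min (gp p r) (gp q r) ≤ gp p q ∧
      min (gp p q) (gp q r) ≤ gp p r ∧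
      min (gp p q) (gp p r) ≤ gp q r := by
  -- 2 • is injective
  have htwo : ∀ a b : Λ, 2 • a = 2 • b → a = b := by
    intro a b h
    rcases lt_trichotomy a b with h' | h' | h'
    · exfalso
      have : 2 • a < 2 • b := by
        rw [two_smul, two_smul]; exact add_lt_add h' h'
      exact absurd h this.ne
    · exact h'
    · exfalso
      have : 2 • b < 2 • a := by
        rw [two_smul, two_smul]; exact add_lt_add h' h'
      exact absurd h.symm this.ne
  -- c 1 x = 0
  have hc0 : ∀ x : G, c 1 x = 0 := by
    intro x
    apply htwo
    rw [hc, hL1', inv_one, one_mul, smul_zero]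
    abel
  -- c is symmetric
  have hsym : ∀ x y : G, c x y = c y x := by
    intro x y
    apply htwo
    rw [hc, hc]
    have : l (y⁻¹ * x) = l (x⁻¹ * y) := by
      rw [← hL2 (y⁻¹ * x), mul_inv_rev, inv_inv]
    rw [this]; abel
  -- distance to basepoint
  have hde : ∀ p : Λ × G, 0 ≤ p.1 → d ((0 : Λ), (1 : G)) p = p.1 := by
    intro p hp
    rw [hd]
    simp [hc0, min_eq_right hp]
  -- gp equals the min formula
  have hgpm : ∀ p q : Λ × G, 0 ≤ p.1 → 0 ≤ q.1 →
      gp p q = min p.1 (min q.1 (c p.2 q.2)) := by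
    intro p q hp hq
    apply htwo
    rw [hgp, hde p hp, hde q hq, hd]
    abel
  -- key ultrametric-type inequality for c
  have key : ∀ a b e : G, min (c a e) (c b e) ≤ c a b := by
    intro a b e
    by_contra h
    push_neg at h
    rw [lt_min_iff] at h
    have h1 := hL3 a e b h.1
    rw [hsym e b] at h1
    exact absurd h1 h.2.ne
  intro p q r hp _ hq _ hr _
  rw [hgpm p q hp hq, hgpm p r hp hr, hgpm q r hq hr]
  refine ⟨?_, ?_, ?_⟩
  · -- min (gp p r) (gp q r) ≤ gp p q
    have A : min (p.1 ⊓ (r.1 ⊓ c p.2 r.2)) (q.1 ⊓ (r.1 ⊓ c q.2 r.2)) ≤ c p.2 r.2 :=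
      (min_le_left _ _).trans ((min_le_right _ _).trans (min_le_right _ _))
    have B : min (p.1 ⊓ (r.1 ⊓ c p.2 r.2)) (q.1 ⊓ (r.1 ⊓ c q.2 r.2)) ≤ c q.2 r.2 :=
      (min_le_right _ _).trans ((min_le_right _ _).trans (min_le_right _ _))
    exact le_min ((min_le_left _ _).trans (min_le_left _ _))
      (le_min ((min_le_right _ _).trans (min_le_left _ _))
        ((le_min A B).trans (key p.2 q.2 r.2)))
  · -- min (gp p q) (gp q r) ≤ gp p r
    have hkey : min (c p.2 q.2) (c q.2 r.2) ≤ c p.2 r.2 := by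
      have := key p.2 r.2 q.2
      rwa [hsym r.2 q.2] at this
    have A : min (p.1 ⊓ (q.1 ⊓ c p.2 q.2)) (q.1 ⊓ (r.1 ⊓ c q.2 r.2)) ≤ c p.2 q.2 :=
      (min_le_left _ _).trans ((min_le_right _ _).trans (min_le_right _ _))
    have B : min (p.1 ⊓ (q.1 ⊓ c p.2 q.2)) (q.1 ⊓ (r.1 ⊓ c q.2 r.2)) ≤ c q.2 r.2 :=
      (min_le_right _ _).trans ((min_le_right _ _).trans (min_le_right _ _))
    exact le_min ((min_le_left _ _).trans (min_le_left _ _))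
      (le_min ((min_le_right _ _).trans ((min_le_right _ _).trans (min_le_left _ _)))
        ((le_min A B).trans hkey))
  · -- min (gp p q) (gp p r) ≤ gp q r
    have hkey : min (c p.2 q.2) (c p.2 r.2) ≤ c q.2 r.2 := by
      have := key q.2 r.2 p.2
      rwa [hsym q.2 p.2, hsym r.2 p.2] at this
    have A : min (p.1 ⊓ (q.1 ⊓ c p.2 q.2)) (p.1 ⊓ (r.1 ⊓ c p.2 r.2)) ≤ c p.2 q.2 :=
      (min_le_left _ _).trans ((min_le_right _ _).trans (min_le_right _ _))
    have B : min (p.1 ⊓ (q.1 ⊓ c p.2 q.2)) (p.1 ⊓ (r.1 ⊓ c p.2 r.2)) ≤ c p.2 r.2 :=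
      (min_le_right _ _).trans ((min_le_right _ _).trans (min_le_right _ _))
    exact le_min ((min_le_left _ _).trans ((min_le_right _ _).trans (min_le_left _ _)))
      (le_min ((min_le_right _ _).trans ((min_le_right _ _).trans (min_le_left _ _)))
        ((le_min A B).trans hkey))
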